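/- Let a > 0, α ∈ (0,1) and β ∈ ℝ. Then there exists a constant C > 0 such that for every t ∈ (0,a]: t^{α} ℓ_a(t)^{β} · ∫_0^t s^{−α} ℓ_a(s)^{1−β} ds ≤ C · ∫_0^t ℓ_a(s) ds. -/

import Mathlib

open MeasureTheory Set Real

lemma logBound (c ε : ℝ) (hε : 0 < ε) :
    ∃ K : ℝ, 0 < K ∧ ∀ r : ℝ, 1 ≤ r → (1 + Real.log r) ^ c ≤ K * r ^ ε := by
  rcases le_or_gt c 0 with hc | hc
  · refine ⟨1, one_pos, fun r hr => ?_⟩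
    have h1 : (1 : ℝ) ≤ 1 + Real.log r := by
      have := Real.log_nonneg hr; linarith
    have h2 : (1 + Real.log r) ^ c ≤ 1 := Real.rpow_le_one_of_one_le_of_nonpos h1 hc
    have h3 : (1 : ℝ) ≤ r ^ ε := Real.one_le_rpow hr hε.le
    linarith
  · set δ : ℝ := min 1 (ε / c) with hδdef
    have hδ0 : 0 < δ := lt_min one_pos (by positivity)
    have hδ1 : δ ≤ 1 := min_le_left _ _
    have hδc : δ * c ≤ ε := by
      have : δ ≤ ε / c := min_le_right _ _
      calc δ * c ≤ (ε / c) * c := by nlinarith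
        _ = ε := by field_simp
    refine ⟨δ ^ (-c), by positivity, fun r hr => ?_⟩
    have hr0 : (0 : ℝ) < r := lt_of_lt_of_le one_pos hr
    have hlog : Real.log r ≤ (r ^ δ - 1) / δ := by
      have h1 : Real.log (r ^ δ) = δ * Real.log r := Real.log_rpow hr0 δ
      have h2 : Real.log (r ^ δ) ≤ r ^ δ - 1 := Real.log_le_sub_one_of_pos (by positivity)
      rw [h1] at h2
      rw [le_div_iff₀ hδ0]
      nlinarith
    have hrδ1 : (1 : ℝ) ≤ r ^ δ := Real.one_le_rpow hr hδ0.le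
    have key : 1 + Real.log r ≤ r ^ δ / δ := by
      rw [le_div_iff₀ hδ0] at hlog ⊢
      nlinarith
    have h1 : (0:ℝ) ≤ 1 + Real.log r := by
      have := Real.log_nonneg hr; linarith
    calc (1 + Real.log r) ^ c ≤ (r ^ δ / δ) ^ c := Real.rpow_le_rpow h1 key hc.le
      _ = (r ^ δ) ^ c / δ ^ c := Real.div_rpow (by positivity) hδ0.le c
      _ = r ^ (δ * c) * δ ^ (-c) := by
          rw [Real.rpow_neg hδ0.le, div_eq_mul_inv, ← Real.rpow_mul hr0.le]
      _ ≤ r ^ ε * δ ^ (-c) := by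
          have := Real.rpow_le_rpow_of_exponent_le hr hδc
          have : (0:ℝ) ≤ δ ^ (-c) := by positivity
          nlinarith [Real.rpow_le_rpow_of_exponent_le hr hδc]
      _ = δ ^ (-c) * r ^ ε := mul_comm _ _

lemma integrableOn_rpow_Ioo {t q : ℝ} (ht : 0 < t) (hq : -1 < q) :
    IntegrableOn (fun s : ℝ => s ^ q) (Ioo 0 t) := by
  rw [← intervalIntegrable_iff_integrableOn_Ioo_of_le ht.le]
  exact intervalIntegral.intervalIntegrable_rpow' hq

lemma integral_rpow_Ioo {t q : ℝ} (ht : 0 < t) (hq : -1 < q) :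
    ∫ s in Ioo (0:ℝ) t, s ^ q = t ^ (q + 1) / (q + 1) := by
  rw [← integral_Ioc_eq_integral_Ioo, ← intervalIntegral.integral_of_le ht.le,
    integral_rpow (Or.inl hq), Real.zero_rpow (by linarith), sub_zero]
theorem stmt_10 (a α β : ℝ) (ha : 0 < a) (hα0 : 0 < α) (hα1 : α < 1) :
    ∃ C : ℝ, 0 < C ∧ ∀ t ∈ Ioc (0 : ℝ) a,
      t ^ α * Real.log (Real.exp 1 * a / t) ^ β *
          (∫ s in Ioo (0 : ℝ) t, s ^ (-α) * Real.log (Real.exp 1 * a / s) ^ (1 - β)) ≤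
        C * ∫ s in Ioo (0 : ℝ) t, Real.log (Real.exp 1 * a / s) := by
  obtain ⟨K, hK, hKb⟩ := logBound (1 - β) ((1 - α) / 2) (by linarith)
  obtain ⟨K₁, hK₁, hK₁b⟩ := logBound 1 ((1 - α) / 2) (by linarith)
  set ε : ℝ := (1 - α) / 2 with hεdef
  have hε : 0 < ε := by rw [hεdef]; linarith
  have hε1 : ε < 1 := by rw [hεdef]; linarith
  set K' : ℝ := max K 1 with hK'def
  have hK'1 : (1 : ℝ) ≤ K' := le_max_right _ _
  have hK'0 : 0 < K' := lt_of_lt_of_le one_pos hK'1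
  refine ⟨K' / ε, by positivity, fun t ht => ?_⟩
  obtain ⟨ht0, hta⟩ := ht
  have hea : (0 : ℝ) < Real.exp 1 * a := by positivity
  -- log lower bound at t
  have hLt1 : 1 ≤ Real.log (Real.exp 1 * a / t) := by
    have h1 : Real.exp 1 ≤ Real.exp 1 * a / t := by
      rw [le_div_iff₀ ht0]; nlinarith [Real.exp_pos 1]
    calc (1 : ℝ) = Real.log (Real.exp 1) := (Real.log_exp 1).symm
      _ ≤ _ := Real.log_le_log (Real.exp_pos 1) h1
  have hLt0 : 0 < Real.log (Real.exp 1 * a / t) := lt_of_lt_of_le one_pos hLt1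
  -- split of the log
  have hsplit : ∀ s : ℝ, 0 < s →
      Real.log (Real.exp 1 * a / s)
        = Real.log (Real.exp 1 * a / t) + Real.log (t / s) := by
    intro s hs0
    have heq : Real.exp 1 * a / s = (Real.exp 1 * a / t) * (t / s) := by
      field_simp
    rw [heq, Real.log_mul (by positivity) (by positivity)]
  -- pointwise bound claim
  have hstep1 : ∀ s : ℝ, 0 < s → s < t →
      Real.log (Real.exp 1 * a / s) ^ (1 - β)
        ≤ K' * (t / s) ^ ε * Real.log (Real.exp 1 * a / t) ^ (1 - β) := by
    intro s hs0 hst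
    have hr : (1 : ℝ) ≤ t / s := (one_le_div hs0).mpr hst.le
    have hlogr : 0 ≤ Real.log (t / s) := Real.log_nonneg hr
    have hLs_eq := hsplit s hs0
    rcases le_or_gt 0 (1 - β) with hβ | hβ
    · have hA : Real.log (Real.exp 1 * a / s)
          ≤ Real.log (Real.exp 1 * a / t) * (1 + Real.log (t / s)) := by
        rw [hLs_eq]; nlinarith
      calc Real.log (Real.exp 1 * a / s) ^ (1 - β)
          ≤ (Real.log (Real.exp 1 * a / t) * (1 + Real.log (t / s))) ^ (1 - β) := by
            apply Real.rpow_le_rpow (by rw [hLs_eq]; linarith) hA hβ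
        _ = Real.log (Real.exp 1 * a / t) ^ (1 - β) * (1 + Real.log (t / s)) ^ (1 - β) :=
            Real.mul_rpow hLt0.le (by linarith)
        _ ≤ Real.log (Real.exp 1 * a / t) ^ (1 - β) * (K * (t / s) ^ ε) := by
            apply mul_le_mul_of_nonneg_left (hKb _ hr) (Real.rpow_nonneg hLt0.le _)
        _ = K * (t / s) ^ ε * Real.log (Real.exp 1 * a / t) ^ (1 - β) := by ring
        _ ≤ K' * (t / s) ^ ε * Real.log (Real.exp 1 * a / t) ^ (1 - β) := by
            have h2 : (0:ℝ) ≤ (t / s) ^ ε := Real.rpow_nonneg (by positivity) _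
            have h3 : (0:ℝ) ≤ Real.log (Real.exp 1 * a / t) ^ (1 - β) :=
              Real.rpow_nonneg hLt0.le _
            exact mul_le_mul_of_nonneg_right
              (mul_le_mul_of_nonneg_right (le_max_left K 1) h2) h3
    · have hA : Real.log (Real.exp 1 * a / t) ≤ Real.log (Real.exp 1 * a / s) := by
        rw [hLs_eq]; linarith
      have h1 : Real.log (Real.exp 1 * a / s) ^ (1 - β)
          ≤ Real.log (Real.exp 1 * a / t) ^ (1 - β) :=
        Real.rpow_le_rpow_of_nonpos hLt0 hA hβ.le
      have h2 : (1:ℝ) ≤ (t / s) ^ ε := Real.one_le_rpow hr hε.le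
      have h3 : (0:ℝ) < Real.log (Real.exp 1 * a / t) ^ (1 - β) :=
        Real.rpow_pos_of_pos hLt0 _
      have h5 : (1:ℝ) * 1 ≤ K' * ((t / s) ^ ε) :=
        mul_le_mul hK'1 h2 (by norm_num) hK'0.le
      calc Real.log (Real.exp 1 * a / s) ^ (1 - β)
          ≤ Real.log (Real.exp 1 * a / t) ^ (1 - β) := h1
        _ = 1 * Real.log (Real.exp 1 * a / t) ^ (1 - β) := by ring
        _ ≤ (K' * (t / s) ^ ε) * Real.log (Real.exp 1 * a / t) ^ (1 - β) :=
            mul_le_mul_of_nonneg_right (by linarith) h3.le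
        _ = K' * (t / s) ^ ε * Real.log (Real.exp 1 * a / t) ^ (1 - β) := by ring
  have hpt : ∀ s ∈ Ioo (0 : ℝ) t,
      s ^ (-α) * Real.log (Real.exp 1 * a / s) ^ (1 - β)
        ≤ (K' * Real.log (Real.exp 1 * a / t) ^ (1 - β) * t ^ ε) * s ^ (-(α + ε)) := by
    rintro s ⟨hs0, hst⟩
    have hts : (t / s) ^ ε = t ^ ε * s ^ (-ε) := by
      rw [Real.div_rpow ht0.le hs0.le, Real.rpow_neg hs0.le, div_eq_mul_inv]
    have hmul : s ^ (-α) * s ^ (-ε) = s ^ (-(α + ε)) := by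
      rw [← Real.rpow_add hs0]; ring_nf
    calc s ^ (-α) * Real.log (Real.exp 1 * a / s) ^ (1 - β)
        ≤ s ^ (-α) * (K' * (t / s) ^ ε * Real.log (Real.exp 1 * a / t) ^ (1 - β)) :=
          mul_le_mul_of_nonneg_left (hstep1 s hs0 hst) (Real.rpow_nonneg hs0.le _)
      _ = (K' * Real.log (Real.exp 1 * a / t) ^ (1 - β) * t ^ ε) * (s ^ (-α) * s ^ (-ε)) := by
          rw [hts]; ring
      _ = _ := by rw [hmul]
  have hq : (-1 : ℝ) < -(α + ε) := by rw [hεdef]; linarith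
  -- bound the first integral
  have hgint : IntegrableOn
      (fun s : ℝ => (K' * Real.log (Real.exp 1 * a / t) ^ (1 - β) * t ^ ε) * s ^ (-(α + ε)))
      (Ioo 0 t) := (integrableOn_rpow_Ioo ht0 hq).const_mul _
  have hImono : (∫ s in Ioo (0:ℝ) t, s ^ (-α) * Real.log (Real.exp 1 * a / s) ^ (1 - β))
      ≤ ∫ s in Ioo (0:ℝ) t,
          (K' * Real.log (Real.exp 1 * a / t) ^ (1 - β) * t ^ ε) * s ^ (-(α + ε)) := by
    apply integral_mono_of_nonneg ?_ hgint ?_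
    · filter_upwards [self_mem_ae_restrict measurableSet_Ioo] with s hs
      have hLs1 : 0 ≤ Real.log (Real.exp 1 * a / s) := by
        rw [hsplit s hs.1]
        have := Real.log_nonneg ((one_le_div hs.1).mpr hs.2.le)
        linarith
      exact mul_nonneg (Real.rpow_nonneg hs.1.le _) (Real.rpow_nonneg hLs1 _)
    · filter_upwards [self_mem_ae_restrict measurableSet_Ioo] with s hs
      exact hpt s hs
  have hIval : (∫ s in Ioo (0:ℝ) t, s ^ (-(α + ε))) = t ^ ε / ε := by
    rw [integral_rpow_Ioo ht0 hq, show -(α + ε) + 1 = ε from by rw [hεdef]; ring]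
  have hIbound : (∫ s in Ioo (0:ℝ) t, s ^ (-α) * Real.log (Real.exp 1 * a / s) ^ (1 - β))
      ≤ K' * Real.log (Real.exp 1 * a / t) ^ (1 - β) * t ^ ε * (t ^ ε / ε) := by
    rw [← hIval, ← integral_const_mul]
    exact hImono
  -- lower bound for the RHS integral
  have hLint : IntegrableOn (fun s : ℝ => Real.log (Real.exp 1 * a / s)) (Ioo 0 t) := by
    apply Integrable.mono'
      ((integrableOn_rpow_Ioo ht0 (show (-1:ℝ) < -ε by linarith)).const_mul
        (Real.log (Real.exp 1 * a / t) * K₁ * t ^ ε))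
    · exact (Real.measurable_log.comp
        (measurable_const.div measurable_id)).aestronglyMeasurable
    · filter_upwards [self_mem_ae_restrict measurableSet_Ioo] with s hs
      have hs0 := hs.1
      have hr : (1 : ℝ) ≤ t / s := (one_le_div hs0).mpr hs.2.le
      have hlogr : 0 ≤ Real.log (t / s) := Real.log_nonneg hr
      have hK₁r := hK₁b _ hr
      rw [Real.rpow_one] at hK₁r
      have hts : (t / s) ^ ε = t ^ ε * s ^ (-ε) := by
        rw [Real.div_rpow ht0.le hs0.le, Real.rpow_neg hs0.le, div_eq_mul_inv]
      have hLs_nonneg : 0 ≤ Real.log (Real.exp 1 * a / s) := by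
        rw [hsplit s hs0]; linarith
      rw [Real.norm_eq_abs, abs_of_nonneg hLs_nonneg]
      have hstep : Real.log (Real.exp 1 * a / s)
          ≤ Real.log (Real.exp 1 * a / t) * (K₁ * (t / s) ^ ε) := by
        rw [hsplit s hs0]
        nlinarith
      calc Real.log (Real.exp 1 * a / s)
          ≤ Real.log (Real.exp 1 * a / t) * (K₁ * (t / s) ^ ε) := hstep
        _ = Real.log (Real.exp 1 * a / t) * K₁ * t ^ ε * s ^ (-ε) := by rw [hts]; ring
  have hlow : Real.log (Real.exp 1 * a / t) * t
      ≤ ∫ s in Ioo (0:ℝ) t, Real.log (Real.exp 1 * a / s) := by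
    have := setIntegral_ge_of_const_le (μ := volume) (c := Real.log (Real.exp 1 * a / t))
      measurableSet_Ioo (by rw [Real.volume_Ioo]; exact ENNReal.ofReal_ne_top)
      (fun s hs => by
        rw [hsplit s hs.1]
        have := Real.log_nonneg ((one_le_div hs.1).mpr hs.2.le)
        linarith) hLint
    rwa [Real.volume_real_Ioo, sub_zero, smul_eq_mul, mul_comm, max_eq_left ht0.le] at this
  -- combine
  have hLHSnn : (0:ℝ) ≤ t ^ α * Real.log (Real.exp 1 * a / t) ^ β :=
    mul_nonneg (Real.rpow_nonneg ht0.le _) (Real.rpow_nonneg hLt0.le _)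
  have hInn : (0:ℝ) ≤ ∫ s in Ioo (0:ℝ) t, s ^ (-α) * Real.log (Real.exp 1 * a / s) ^ (1 - β) := by
    apply setIntegral_nonneg measurableSet_Ioo
    intro s hs
    have hLs1 : 0 ≤ Real.log (Real.exp 1 * a / s) := by
      rw [hsplit s hs.1]
      have := Real.log_nonneg ((one_le_div hs.1).mpr hs.2.le)
      linarith
    exact mul_nonneg (Real.rpow_nonneg hs.1.le _) (Real.rpow_nonneg hLs1 _)
  have h1 : t ^ α * t ^ ε * t ^ ε = t := by
    rw [← Real.rpow_add ht0, ← Real.rpow_add ht0,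
      show α + ε + ε = 1 from by rw [hεdef]; ring, Real.rpow_one]
  have h2 : Real.log (Real.exp 1 * a / t) ^ β * Real.log (Real.exp 1 * a / t) ^ (1 - β)
      = Real.log (Real.exp 1 * a / t) := by
    rw [← Real.rpow_add hLt0, show β + (1 - β) = 1 from by ring, Real.rpow_one]
  calc t ^ α * Real.log (Real.exp 1 * a / t) ^ β *
          (∫ s in Ioo (0 : ℝ) t, s ^ (-α) * Real.log (Real.exp 1 * a / s) ^ (1 - β))
      ≤ t ^ α * Real.log (Real.exp 1 * a / t) ^ β *
          (K' * Real.log (Real.exp 1 * a / t) ^ (1 - β) * t ^ ε * (t ^ ε / ε)) :=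
        mul_le_mul_of_nonneg_left hIbound hLHSnn
    _ = (K' / ε) * ((t ^ α * t ^ ε * t ^ ε) *
          (Real.log (Real.exp 1 * a / t) ^ β * Real.log (Real.exp 1 * a / t) ^ (1 - β))) := by
        field_simp
    _ = (K' / ε) * (Real.log (Real.exp 1 * a / t) * t) := by rw [h1, h2]; ring
    _ ≤ (K' / ε) * ∫ s in Ioo (0:ℝ) t, Real.log (Real.exp 1 * a / s) :=
        mul_le_mul_of_nonneg_left hlow (by positivity)
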